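/- If L = (1+a_0)···(1+a_{K-1}) = 1 almost surely, σ_n → 0, the a_n are bounded K-periodic random variables, and ‖ξ_k‖_{L^2(Ω)} ≤ 1 for all k, then ‖X_n − X_{n+K}‖_{L^2(Ω)} → 0 as n → ∞. -/

import Mathlib

open MeasureTheory ProbabilityTheory Filter Topology Finset
open scoped ENNReal NNReal

/-- If L = 1 a.s., σ_n → 0, a_n bounded K-periodic, ‖ξ_k‖_{L²} ≤ 1, then
‖X_n − X_{n+K}‖_{L²} → 0. -/
theorem stmt1 {Ω : Type*} [MeasureSpace Ω] [IsProbabilityMeasure (ℙ : Measure Ω)]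
    (K : ℕ) (hK : 0 < K)
    (a ξ X : ℕ → Ω → ℝ) (σ : ℕ → ℝ) (x0 : ℝ)
    (ha_meas : ∀ n, Measurable (a n)) (hξ_meas : ∀ n, Measurable (ξ n))
    (ha_bdd : ∃ C : ℝ, ∀ n, ∀ᵐ ω, |a n ω| ≤ C)
    (ha_per : ∀ n, ∀ᵐ ω, a (n + K) ω = a n ω)
    (hσ : Tendsto σ atTop (𝓝 0))
    (hξ : ∀ k, eLpNorm (ξ k) 2 ℙ ≤ 1)
    (hL : ∀ᵐ ω, ∏ i ∈ Finset.range K, (1 + a i ω) = 1)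
    (hX0 : ∀ ω, X 0 ω = x0)
    (hX : ∀ n ω, X (n + 1) ω = (1 + a n ω) * X n ω + σ n * ξ (n + 1) ω) :
    Tendsto (fun n => eLpNorm (fun ω => X n ω - X (n + K) ω) 2 ℙ) atTop (𝓝 0) := by
  obtain ⟨C0, hC0⟩ := ha_bdd
  set C : ℝ := max C0 0 with hCdef
  have hCnn : 0 ≤ C := le_max_right _ _
  have hCb : ∀ n, ∀ᵐ ω, |a n ω| ≤ C := fun n =>
    (hC0 n).mono fun ω h => h.trans (le_max_left _ _)
  set M : ℝ := (1 + C) ^ K with hMdef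
  have hM1 : (1 : ℝ) ≤ M := one_le_pow₀ (by linarith)
  -- measurability of X n
  have hXmeas : ∀ n, Measurable (X n) := by
    intro n
    induction n with
    | zero =>
      have : X 0 = fun _ => x0 := funext hX0
      rw [this]; exact measurable_const
    | succ n ih =>
      have : X (n + 1) = fun ω => (1 + a n ω) * X n ω + σ n * ξ (n + 1) ω :=
        funext (hX n)
      rw [this]
      exact ((measurable_const.add (ha_meas n)).mul ih).add
        (measurable_const.mul (hξ_meas (n + 1)))
  -- pointwise expansion of the recursion
  have key : ∀ m n ω, X (n + m) ω =
      (∏ i ∈ Finset.Ico n (n + m), (1 + a i ω)) * X n ω +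
      ∑ j ∈ Finset.range m,
        (∏ i ∈ Finset.Ico (n + j + 1) (n + m), (1 + a i ω)) * (σ (n + j) * ξ (n + j + 1) ω) := by
    intro m
    induction m with
    | zero => intro n ω; simp
    | succ m ih =>
      intro n ω
      simp only [← Nat.add_assoc]
      have e1 : ∏ i ∈ Finset.Ico n (n + m + 1), (1 + a i ω) =
          (∏ i ∈ Finset.Ico n (n + m), (1 + a i ω)) * (1 + a (n + m) ω) :=
        Finset.prod_Ico_succ_top (Nat.le_add_right n m) _
      have e2 : ∏ i ∈ Finset.Ico (n + m + 1) (n + m + 1), (1 + a i ω) = (1 : ℝ) := by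
        rw [Finset.Ico_self, Finset.prod_empty]
      have e3 : ∀ j ∈ Finset.range m,
          (∏ i ∈ Finset.Ico (n + j + 1) (n + m + 1), (1 + a i ω)) *
            (σ (n + j) * ξ (n + j + 1) ω) =
          (1 + a (n + m) ω) *
            ((∏ i ∈ Finset.Ico (n + j + 1) (n + m), (1 + a i ω)) *
              (σ (n + j) * ξ (n + j + 1) ω)) := by
        intro j hj
        have hjm : j < m := Finset.mem_range.mp hj
        rw [Finset.prod_Ico_succ_top (by omega : n + j + 1 ≤ n + m)]
        ring
      rw [hX (n + m) ω, ih n ω, Finset.sum_range_succ, e1, e2,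
        Finset.sum_congr rfl e3, ← Finset.mul_sum]
      ring
  -- the good almost-sure event
  have hE : ∀ᵐ ω, (∀ n, a (n + K) ω = a n ω) ∧
      (∏ i ∈ Finset.range K, (1 + a i ω) = 1) ∧ ∀ n, |a n ω| ≤ C :=
    (ae_all_iff.mpr ha_per).and (hL.and (ae_all_iff.mpr hCb))
  -- product over any window of length K is 1, on the good event
  have hprod1 : ∀ᵐ ω, ∀ n, ∏ i ∈ Finset.Ico n (n + K), (1 + a i ω) = 1 := by
    filter_upwards [hE] with ω hω
    intro n
    induction n with
    | zero =>
      have h0 : (0 : ℕ) + K = K := Nat.zero_add K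
      rw [h0, ← Finset.range_eq_Ico]
      exact hω.2.1
    | succ n ih =>
      have h1 : ∏ i ∈ Finset.Ico (n + 1) (n + 1 + K), (1 + a i ω) =
          (∏ i ∈ Finset.Ico (n + 1) (n + K), (1 + a i ω)) * (1 + a (n + K) ω) := by
        rw [show n + 1 + K = (n + K) + 1 by omega]
        exact Finset.prod_Ico_succ_top (by omega) _
      have h2 : ∏ i ∈ Finset.Ico n (n + K), (1 + a i ω) =
          (1 + a n ω) * ∏ i ∈ Finset.Ico (n + 1) (n + K), (1 + a i ω) :=
        Finset.prod_eq_prod_Ico_succ_bot (by omega) _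
      rw [h1, hω.1 n]
      rw [h2] at ih
      rw [mul_comm]
      exact ih
  -- bound on products over windows
  have habs : ∀ᵐ ω, ∀ s t : ℕ, t - s ≤ K → |∏ i ∈ Finset.Ico s t, (1 + a i ω)| ≤ M := by
    filter_upwards [hE] with ω hω
    intro s t hst
    calc |∏ i ∈ Finset.Ico s t, (1 + a i ω)|
        = ∏ i ∈ Finset.Ico s t, |1 + a i ω| := Finset.abs_prod _ _
      _ ≤ ∏ i ∈ Finset.Ico s t, (1 + C) := by
          refine Finset.prod_le_prod (fun i _ => abs_nonneg _) (fun i _ => ?_)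
          calc |1 + a i ω| ≤ |(1 : ℝ)| + |a i ω| := abs_add_le _ _
            _ ≤ 1 + C := by rw [abs_one]; linarith [hω.2.2 i]
      _ = (1 + C) ^ (t - s) := by rw [Finset.prod_const, Nat.card_Ico]
      _ ≤ M := pow_le_pow_right₀ (by linarith) hst
  -- main estimate
  have hmain : ∀ n, eLpNorm (fun ω => X n ω - X (n + K) ω) 2 ℙ ≤
      ∑ j ∈ Finset.range K, ENNReal.ofReal (M * |σ (n + j)|) := by
    intro n
    set F : ℕ → Ω → ℝ := fun j ω =>
      (∏ i ∈ Finset.Ico (n + j + 1) (n + K), (1 + a i ω)) * (σ (n + j) * ξ (n + j + 1) ω)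
      with hFdef
    have hFmeas : ∀ j, Measurable (F j) := by
      intro j
      exact (Finset.measurable_prod _ fun i _ => measurable_const.add (ha_meas i)).mul
        (measurable_const.mul (hξ_meas (n + j + 1)))
    have hcongr : ∀ᵐ ω, X n ω - X (n + K) ω = (-(∑ j ∈ Finset.range K, F j)) ω := by
      filter_upwards [hprod1] with ω hω
      have := key K n ω
      rw [hω n] at this
      simp only [Pi.neg_apply, Finset.sum_apply, hFdef]
      rw [this]
      ring
    rw [eLpNorm_congr_ae hcongr, eLpNorm_neg]
    refine le_trans (eLpNorm_sum_le (fun j _ => (hFmeas j).aestronglyMeasurable)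
      (by norm_num)) ?_
    refine Finset.sum_le_sum fun j hj => ?_
    have hjK : j < K := Finset.mem_range.mp hj
    have hM0 : (0 : ℝ) ≤ M := le_trans zero_le_one hM1
    have hMσ0 : (0 : ℝ) ≤ M * |σ (n + j)| := mul_nonneg hM0 (abs_nonneg _)
    have hmono : ∀ᵐ ω, ‖F j ω‖ ≤ ‖(M * |σ (n + j)|) • ξ (n + j + 1) ω‖ := by
      filter_upwards [habs] with ω hω
      have hp := hω (n + j + 1) (n + K) (by omega)
      simp only [hFdef, smul_eq_mul, Real.norm_eq_abs, abs_mul, abs_abs,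
        abs_of_nonneg hM0]
      rw [mul_assoc]
      exact mul_le_mul_of_nonneg_right hp
        (mul_nonneg (abs_nonneg _) (abs_nonneg _))
    calc eLpNorm (F j) 2 ℙ
        ≤ eLpNorm ((M * |σ (n + j)|) • ξ (n + j + 1)) 2 ℙ := eLpNorm_mono_ae hmono
      _ = ‖M * |σ (n + j)|‖₊ • eLpNorm (ξ (n + j + 1)) 2 ℙ :=
          eLpNorm_const_smul _ _ _ _
      _ = (‖M * |σ (n + j)|‖₊ : ℝ≥0∞) * eLpNorm (ξ (n + j + 1)) 2 ℙ := by
          simp [ENNReal.smul_def]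
      _ ≤ (‖M * |σ (n + j)|‖₊ : ℝ≥0∞) * 1 := mul_le_mul_right (hξ (n + j + 1)) _
      _ = ENNReal.ofReal (M * |σ (n + j)|) := by
          rw [mul_one]; exact (ofReal_norm (M * |σ (n + j)|)).symm.trans (by rw [Real.norm_of_nonneg hMσ0])
  -- the bound tends to 0
  have hB : Tendsto (fun n => ∑ j ∈ Finset.range K, ENNReal.ofReal (M * |σ (n + j)|))
      atTop (𝓝 0) := by
    have h0 : ∀ j : ℕ, Tendsto (fun n => ENNReal.ofReal (M * |σ (n + j)|)) atTop (𝓝 0) := by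
      intro j
      have h1 : Tendsto (fun n => σ (n + j)) atTop (𝓝 0) :=
        hσ.comp (tendsto_add_atTop_nat j)
      have h2 : Tendsto (fun n => M * |σ (n + j)|) atTop (𝓝 0) := by
        have := h1.abs
        rw [abs_zero] at this
        simpa using this.const_mul M
      have := ENNReal.tendsto_ofReal h2
      simpa using this
    have := tendsto_finset_sum (Finset.range K) (fun j _ => h0 j)
    simpa using this
  exact tendsto_of_tendsto_of_tendsto_of_le_of_le tendsto_const_nhds hB
    (fun n => zero_le) hmain
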